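/- Let (X,μ), (Y,ν) be σ-finite measure spaces, 0 < p < ∞, 0 < q ≤ ∞. Let T be quasi-additive on L^p(X) with constant K ≥ 1 (|T(f+g)| ≤ K(|T(f)|+|T(g)|) ν-a.e.) and of weak-type (p,q). Let α > 0 satisfy (2K)^α = 2. Then whenever ∑_j f_j converges in L^p(X), one has |T(∑_j f_j)|^α ≤ 4 ∑_j |T(f_j)|^α ν-a.e. -/

import Mathlib

open MeasureTheory Filter Set Topology ENNReal

noncomputable section
namespace Paper

variable {α ε : Type*} [MeasurableSpace α]

/-- Decreasing rearrangement of `f` with respect to `μ`. -/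
def rearr [NNNorm ε] (μ : Measure α) (f : α → ε) (t : ℝ≥0∞) : ℝ≥0∞ :=
  sInf {s : ℝ≥0∞ | μ {x | s < (‖f x‖₊ : ℝ≥0∞)} ≤ t}

/-- Lorentz quasinorm `‖f‖_{L^{p,q}(μ)}` (with the convention `L^{∞,q} = L^∞`). -/
def lorentzNorm [NNNorm ε] (μ : Measure α) (p q : ℝ≥0∞) (f : α → ε) : ℝ≥0∞ :=
  if p = ∞ then rearr μ f 0
  else if q = ∞ then ⨆ t : ℝ≥0∞, t ^ (1 / p).toReal * rearr μ f t
  else (∫⁻ t in Ioi (0 : ℝ),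
      (ENNReal.ofReal t ^ (1 / p).toReal * rearr μ f (ENNReal.ofReal t)) ^ q.toReal
        / ENNReal.ofReal t) ^ (1 / q.toReal)

section Core
variable {K a : ℝ}

lemma alpha_le_one (hK : 1 ≤ K) (ha : 0 < a) (hKa : (2*K)^a = 2) : a ≤ 1 := by
  have h2 : (2:ℝ) ^ a ≤ (2*K) ^ a := by
    apply Real.rpow_le_rpow (by norm_num) (by linarith) ha.le
  rw [hKa] at h2
  have : (2:ℝ) ^ a ≤ (2:ℝ) ^ (1:ℝ) := by rwa [Real.rpow_one]
  exact (Real.rpow_le_rpow_left_iff one_lt_two).mp this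

lemma merge_bound (hK : 1 ≤ K) (ha : 0 < a) (hKa : (2*K)^a = 2)
    {x y s w : ℝ} (hx : 0 ≤ x) (hy : 0 ≤ y) (hs : 0 ≤ s)
    (hxa : x ^ a ≤ s) (hya : y ^ a ≤ s)
    (hw : 0 ≤ w) (hwK : w ≤ K * (x + y)) : w ^ a ≤ 2 * s := by
  have hsa : 0 ≤ s ^ (1/a) := Real.rpow_nonneg hs _
  have key : ∀ u : ℝ, 0 ≤ u → u ^ a ≤ s → u ≤ s ^ (1/a) := by
    intro u hu hua
    have : (u ^ a) ^ (1/a) ≤ s ^ (1/a) :=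
      Real.rpow_le_rpow (Real.rpow_nonneg hu _) hua (by positivity)
    rwa [← Real.rpow_mul hu, mul_one_div, div_self ha.ne', Real.rpow_one] at this
  have hxle := key x hx hxa
  have hyle := key y hy hya
  have hw2 : w ≤ (2*K) * s ^ (1/a) := by nlinarith
  calc w ^ a ≤ ((2*K) * s ^ (1/a)) ^ a := Real.rpow_le_rpow hw hw2 ha.le
    _ = (2*K) ^ a * (s ^ (1/a)) ^ a := Real.mul_rpow (by linarith) hsa
    _ = 2 * s := by
        rw [hKa, ← Real.rpow_mul hs, one_div, inv_mul_cancel₀ ha.ne', Real.rpow_one]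

def wsum (L : List (Finset ℕ × ℤ)) : ℝ := (L.map (fun p => (2:ℝ) ^ p.2)).sum
def msr (z : ℤ) (L : List (Finset ℕ × ℤ)) : ℕ := (L.map (fun p => (z - p.2).toNat)).sum
def uni (L : List (Finset ℕ × ℤ)) : Finset ℕ := (L.map Prod.fst).foldr (· ∪ ·) ∅

@[simp] lemma wsum_nil : wsum [] = 0 := rfl
@[simp] lemma wsum_cons (p : Finset ℕ × ℤ) (L) : wsum (p :: L) = 2 ^ p.2 + wsum L := rfl
@[simp] lemma msr_cons (z : ℤ) (p : Finset ℕ × ℤ) (L) :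
    msr z (p :: L) = (z - p.2).toNat + msr z L := rfl
@[simp] lemma uni_nil : uni [] = ∅ := rfl
@[simp] lemma uni_cons (p : Finset ℕ × ℤ) (L) : uni (p :: L) = p.1 ∪ uni L := rfl

lemma wsum_nonneg (L : List (Finset ℕ × ℤ)) : 0 ≤ wsum L := by
  induction L with
  | nil => simp
  | cons p t ih => simp only [wsum_cons]; positivity

lemma mem_uni {x : ℕ} {L : List (Finset ℕ × ℤ)} : x ∈ uni L ↔ ∃ p ∈ L, x ∈ p.1 := by
  induction L with
  | nil => simp
  | cons p t ih => simp [ih]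

lemma uni_perm {L L' : List (Finset ℕ × ℤ)} (h : L.Perm L') : uni L = uni L' := by
  ext x; simp only [mem_uni]
  constructor <;> rintro ⟨p, hp, hx⟩ <;> exact ⟨p, by first | exact h.mem_iff.mp hp | exact h.mem_iff.mpr hp, hx⟩

lemma wsum_perm {L L' : List (Finset ℕ × ℤ)} (h : L.Perm L') : wsum L = wsum L' :=
  (h.map _).sum_eq

lemma msr_perm {z : ℤ} {L L' : List (Finset ℕ × ℤ)} (h : L.Perm L') : msr z L = msr z L' :=
  (h.map _).sum_eq

lemma wsum_dvd {c : ℤ} {L : List (Finset ℕ × ℤ)} (h : ∀ r ∈ L, c ≤ r.2) :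
    ∃ n : ℕ, wsum L = 2 ^ c * n := by
  induction L with
  | nil => exact ⟨0, by simp⟩
  | cons r t ih =>
    obtain ⟨n, hn⟩ := ih (fun s hs => h s (List.mem_cons_of_mem _ hs))
    refine ⟨2 ^ (r.2 - c).toNat + n, ?_⟩
    have hrc : c ≤ r.2 := h r (List.mem_cons_self)
    have : (2:ℝ) ^ r.2 = 2 ^ c * (2 ^ (r.2 - c).toNat : ℕ) := by
      push_cast
      rw [← zpow_natCast (2:ℝ) (r.2 - c).toNat, Int.toNat_of_nonneg (by omega),
        ← zpow_add₀ (two_ne_zero)]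
      ring_nf
    simp only [wsum_cons, hn, this]
    push_cast
    ring

end Core

section Core2
variable {K a : ℝ}

lemma two_zpow_split {c d : ℤ} (h : c ≤ d) :
    (2:ℝ) ^ d = 2 ^ c * ((2 ^ ((d - c).toNat) : ℕ) : ℝ) := by
  push_cast
  rw [← zpow_natCast (2:ℝ) (d - c).toNat, Int.toNat_of_nonneg (by omega),
    ← zpow_add₀ (two_ne_zero)]
  ring_nf

lemma claimE (hK : 1 ≤ K) (ha : 0 < a) (hKa : (2*K)^a = 2)
    (ρ : Finset ℕ → ℝ) (hρ : ∀ S, 0 ≤ ρ S)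
    (hq : ∀ S T : Finset ℕ, Disjoint S T → ρ (S ∪ T) ≤ K * (ρ S + ρ T)) (z : ℤ) :
    ∀ (m : ℕ) (L : List (Finset ℕ × ℤ)), msr z L ≤ m → L ≠ [] →
      L.Pairwise (fun p q => Disjoint p.1 q.1) →
      (∀ p ∈ L, ρ p.1 ^ a ≤ 2 ^ p.2) →
      wsum L ≤ 2 ^ z →
      ρ (uni L) ^ a ≤ 2 ^ z := by
  intro m
  induction m using Nat.strong_induction_on with
  | _ m ih =>
  intro L hm hne hpair hbd hws
  -- sort the list by exponent
  obtain ⟨L', hperm, hsort⟩ :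
      ∃ L' : List (Finset ℕ × ℤ), L'.Perm L ∧ L'.Pairwise (fun p q => p.2 ≤ q.2) := by
    refine ⟨L.mergeSort (fun p q => decide (p.2 ≤ q.2)), List.mergeSort_perm _ _, ?_⟩
    have := List.pairwise_mergeSort (le := fun (p q : Finset ℕ × ℤ) => decide (p.2 ≤ q.2))
      (fun a b c hab hbc => by simp only [decide_eq_true_eq] at *; omega)
      (fun a b => by simp only [Bool.or_eq_true, decide_eq_true_eq]; omega) L
    simpa only [decide_eq_true_eq] using this
  have hne' : L' ≠ [] := fun h => hne (List.Perm.eq_nil (h ▸ hperm.symm))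
  have hpair' : L'.Pairwise (fun p q => Disjoint p.1 q.1) :=
    (hperm.pairwise_iff (fun h => h.symm)).mpr hpair
  have hbd' : ∀ p ∈ L', ρ p.1 ^ a ≤ 2 ^ p.2 := fun p hp => hbd p (hperm.subset hp)
  have hws' : wsum L' ≤ 2 ^ z := by rw [wsum_perm hperm]; exact hws
  have hm' : msr z L' ≤ m := by rw [msr_perm hperm]; exact hm
  rw [← uni_perm hperm]
  clear hws hm hbd hpair hne
  rcases L' with _ | ⟨p, L2⟩
  · exact absurd rfl hne'
  rcases L2 with _ | ⟨q, rest⟩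
  · -- singleton
    simp only [uni_cons, uni_nil, Finset.union_empty]
    have h1 : (2:ℝ) ^ p.2 ≤ 2 ^ z := by
      simpa only [wsum_cons, wsum_nil, add_zero] using hws'
    exact le_trans (hbd' p (List.mem_cons_self)) h1
  · -- at least two elements
    have hrest_nonneg := wsum_nonneg rest
    have h2 : (2:ℝ) ^ p.2 + 2 ^ q.2 + wsum rest ≤ 2 ^ z := by
      simpa only [wsum_cons, ← add_assoc] using hws'
    have hqz : (0:ℝ) < 2 ^ q.2 := zpow_pos two_pos _
    have hpz : p.2 < z := by
      by_contra hcon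
      push_neg at hcon
      have : (2:ℝ) ^ z ≤ 2 ^ p.2 := zpow_le_zpow_right₀ one_le_two hcon
      linarith
    have hpq : p.2 ≤ q.2 := (List.pairwise_cons.mp hsort).1 q (List.mem_cons_self)
    have hsort_tail : (q :: rest).Pairwise (fun p q => p.2 ≤ q.2) :=
      (List.pairwise_cons.mp hsort).2
    have hpd : ∀ r ∈ q :: rest, Disjoint p.1 r.1 := (List.pairwise_cons.mp hpair').1
    have hpair_tail : (q :: rest).Pairwise (fun p q => Disjoint p.1 q.1) :=
      (List.pairwise_cons.mp hpair').2
    rcases eq_or_lt_of_le hpq with heq | hlt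
    · -- merge p and q
      set M : List (Finset ℕ × ℤ) := (p.1 ∪ q.1, p.2 + 1) :: rest with hM
      have hdisj : Disjoint p.1 q.1 := hpd q (List.mem_cons_self)
      have hbnd : ρ (p.1 ∪ q.1) ^ a ≤ 2 ^ (p.2 + 1) := by
        have hmb := merge_bound hK ha hKa (hρ p.1) (hρ q.1)
          (le_of_lt (zpow_pos two_pos p.2))
          (hbd' p (List.mem_cons_self))
          (by rw [heq]; exact hbd' q (List.mem_cons_of_mem _ (List.mem_cons_self)))
          (hρ _) (hq _ _ hdisj)
        calc ρ (p.1 ∪ q.1) ^ a ≤ 2 * 2 ^ p.2 := hmb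
          _ = 2 ^ (p.2 + 1) := by rw [zpow_add_one₀ two_ne_zero]; ring
      have hmlt : msr z M < msr z (p :: q :: rest) := by
        simp only [hM, msr_cons]
        have : q.2 = p.2 := heq.symm
        omega
      have hres := ih (msr z M) (lt_of_lt_of_le hmlt hm') M le_rfl (by simp [hM])
        (by
          refine List.Pairwise.cons ?_ ((List.pairwise_cons.mp hpair_tail).2)
          intro r hr
          exact Finset.disjoint_union_left.mpr
            ⟨hpd r (List.mem_cons_of_mem _ hr), (List.pairwise_cons.mp hpair_tail).1 r hr⟩)
        (by
          intro r hr
          rcases List.mem_cons.mp hr with h | h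
          · rw [h]; exact hbnd
          · exact hbd' r (List.mem_cons_of_mem _ (List.mem_cons_of_mem _ h)))
        (by
          have hwM : wsum M = wsum (p :: q :: rest) := by
            simp only [hM, wsum_cons]
            have h21 : (2:ℝ) ^ (p.2 + 1) = 2 ^ p.2 + 2 ^ q.2 := by
              rw [← heq, zpow_add_one₀ two_ne_zero]; ring
            linarith
          rw [hwM]; exact hws')
      simpa only [hM, uni_cons, Finset.union_assoc] using hres
    · -- double the weight of p
      set M : List (Finset ℕ × ℤ) := (p.1, p.2 + 1) :: q :: rest with hM
      have hge : ∀ r ∈ q :: rest, p.2 + 1 ≤ r.2 := by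
        intro r hr
        rcases List.mem_cons.mp hr with h | h
        · rw [h]; omega
        · have := (List.pairwise_cons.mp hsort_tail).1 r h
          omega
      obtain ⟨n, hn⟩ := wsum_dvd hge
      have hzge : p.2 + 1 ≤ z := by omega
      have hNdef := two_zpow_split hzge
      set N : ℕ := 2 ^ ((z - (p.2+1)).toNat) with hNN
      have ht : (0:ℝ) < 2 ^ (p.2 + 1) := zpow_pos two_pos _
      have hp1 : (2:ℝ) ^ (p.2+1) = 2 * 2 ^ p.2 := by rw [zpow_add_one₀ two_ne_zero]; ring
      have hsum2 : (2:ℝ) ^ p.2 + 2 ^ (p.2+1) * n ≤ 2 ^ (p.2+1) * N := by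
        calc (2:ℝ) ^ p.2 + 2 ^ (p.2+1) * n = wsum (p :: q :: rest) := by
              rw [wsum_cons, hn]
          _ ≤ 2 ^ z := hws'
          _ = 2 ^ (p.2+1) * N := hNdef
      have hnN : (n : ℝ) + 1 ≤ N := by
        have hp2 : (0:ℝ) < 2 ^ p.2 := zpow_pos two_pos _
        have h1 : (1:ℝ) + 2 * n ≤ 2 * N := by nlinarith [hsum2, hp1]
        have h2 : (1:ℕ) + 2 * n ≤ 2 * N := by exact_mod_cast h1
        have : n + 1 ≤ N := by omega
        exact_mod_cast this
      have hmlt : msr z M < msr z (p :: q :: rest) := by simp only [hM, msr_cons]; omega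
      have hres := ih (msr z M) (lt_of_lt_of_le hmlt hm') M le_rfl (by simp [hM])
        (List.Pairwise.cons hpd hpair_tail)
        (by
          intro r hr
          rcases List.mem_cons.mp hr with h | h
          · rw [h]
            calc ρ p.1 ^ a ≤ 2 ^ p.2 := hbd' p (List.mem_cons_self)
              _ ≤ 2 ^ (p.2 + 1) := zpow_le_zpow_right₀ one_le_two (by omega)
          · exact hbd' r (List.mem_cons_of_mem _ h))
        (by
          calc wsum M = 2 ^ (p.2+1) + wsum (q :: rest) := by simp [hM, wsum_cons]
            _ = 2 ^ (p.2+1) * (n + 1) := by rw [hn]; ring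
            _ ≤ 2 ^ (p.2+1) * N := by
                apply mul_le_mul_of_nonneg_left _ ht.le
                exact_mod_cast hnN
            _ = 2 ^ z := hNdef.symm)
      simpa only [hM, uni_cons] using hres

end Core2

section Core3
variable {K a : ℝ}

lemma wsum_map_range (k : ℕ → ℤ) (n : ℕ) :
    wsum ((List.range n).map fun i => (({i} : Finset ℕ), k i)) =
      ∑ i ∈ Finset.range n, (2:ℝ) ^ (k i) := by
  induction n with
  | zero => simp [wsum]
  | succ n ihn =>
    rw [List.range_succ, Finset.sum_range_succ, ← ihn]
    simp [wsum]

lemma uni_map_range (k : ℕ → ℤ) (n : ℕ) :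
    uni ((List.range n).map fun i => (({i} : Finset ℕ), k i)) = Finset.range n := by
  ext x
  simp only [mem_uni, List.mem_map, List.mem_range, Finset.mem_range, Finset.mem_singleton]
  constructor
  · rintro ⟨p, ⟨i, hi, rfl⟩, hx⟩
    simp only [Finset.mem_singleton] at hx
    omega
  · intro hx
    exact ⟨({x}, k x), ⟨x, hx, rfl⟩, Finset.mem_singleton_self x⟩

lemma fin_bound (hK : 1 ≤ K) (ha : 0 < a) (hKa : (2*K)^a = 2)
    (ρ : Finset ℕ → ℝ) (hρ : ∀ S, 0 ≤ ρ S)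
    (hq : ∀ S T : Finset ℕ, Disjoint S T → ρ (S ∪ T) ≤ K * (ρ S + ρ T))
    (n : ℕ) (hn : 0 < n) :
    ρ (Finset.range n) ^ a ≤ 4 * ∑ i ∈ Finset.range n, ρ {i} ^ a := by
  set A := ∑ i ∈ Finset.range n, ρ {i} ^ a with hA
  have hA0 : 0 ≤ A := Finset.sum_nonneg fun i _ => Real.rpow_nonneg (hρ _) _
  have key : ∀ ε : ℝ, 0 < ε → ρ (Finset.range n) ^ a ≤ 4 * A + ε := by
    intro ε hε
    set δ := ε / (4 * n) with hδ
    have hn' : (0:ℝ) < n := by exact_mod_cast hn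
    have hδ0 : 0 < δ := by positivity
    have hex : ∀ i : ℕ, ∃ c : ℤ, ρ {i} ^ a ≤ 2 ^ c ∧ (2:ℝ) ^ c ≤ 2 * (ρ {i} ^ a + δ) := by
      intro i
      have hnn := Real.rpow_nonneg (hρ {i}) a
      obtain ⟨c, hc1, hc2⟩ := exists_mem_Ioc_zpow (x := ρ {i} ^ a + δ) (by linarith) one_lt_two
      refine ⟨c + 1, le_trans (by linarith) hc2, ?_⟩
      have : (2:ℝ) ^ (c+1) = 2 * 2 ^ c := by rw [zpow_add_one₀ two_ne_zero]; ring
      rw [this]; linarith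
    choose k hk1 hk2 using hex
    set L := (List.range n).map fun i => (({i} : Finset ℕ), k i) with hL
    have hwL : wsum L = ∑ i ∈ Finset.range n, (2:ℝ) ^ (k i) := wsum_map_range k n
    have hB1 : wsum L ≤ 2 * A + ε / 2 := by
      rw [hwL]
      calc ∑ i ∈ Finset.range n, (2:ℝ) ^ (k i)
          ≤ ∑ i ∈ Finset.range n, 2 * (ρ {i} ^ a + δ) :=
            Finset.sum_le_sum fun i _ => hk2 i
        _ = 2 * A + 2 * n * δ := by
            simp only [mul_add, Finset.sum_add_distrib, ← Finset.mul_sum, Finset.sum_const,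
              Finset.card_range, nsmul_eq_mul, hA]
            ring
        _ = 2 * A + ε / 2 := by
            rw [hδ]; field_simp; ring
    have hB0 : 0 < wsum L := by
      rw [hwL]
      refine Finset.sum_pos (fun i _ => zpow_pos two_pos _) ?_
      exact Finset.nonempty_range_iff.mpr hn.ne'
    obtain ⟨z, hz1, hz2⟩ := exists_mem_Ioc_zpow (x := wsum L) hB0 one_lt_two
    have h2z : (2:ℝ) ^ (z+1) ≤ 2 * wsum L := by
      have : (2:ℝ) ^ (z+1) = 2 * 2 ^ z := by rw [zpow_add_one₀ two_ne_zero]; ring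
      rw [this]; linarith
    have hLne : L ≠ [] := by
      simp only [hL, ne_eq, List.map_eq_nil_iff, List.range_eq_nil]
      omega
    have hpairL : L.Pairwise (fun p q => Disjoint p.1 q.1) := by
      refine List.Pairwise.map (R := fun i j : ℕ => i ≠ j) _ ?_ List.nodup_range
      intro i j hij
      exact Finset.disjoint_singleton.mpr hij
    have hbdL : ∀ p ∈ L, ρ p.1 ^ a ≤ 2 ^ p.2 := by
      rintro p hp
      simp only [hL, List.mem_map, List.mem_range] at hp
      obtain ⟨i, hi, rfl⟩ := hp
      exact hk1 i
    have hmain := claimE hK ha hKa ρ hρ hq (z+1) (msr (z+1) L) L le_rfl hLne hpairL hbdL hz2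
    rw [uni_map_range] at hmain
    calc ρ (Finset.range n) ^ a ≤ 2 ^ (z+1) := hmain
      _ ≤ 2 * wsum L := h2z
      _ ≤ 2 * (2 * A + ε / 2) := by linarith
      _ = 4 * A + ε := by ring
  exact le_of_forall_pos_le_add key

end Core3



lemma rearr_spec [NNNorm ε] {μ : Measure α} {f : α → ε} {t c : ℝ≥0∞}
    (h : rearr μ f t < c) : μ {x | c ≤ (‖f x‖₊ : ℝ≥0∞)} ≤ t := by
  obtain ⟨s, hs, hsc⟩ := sInf_lt_iff.mp h
  exact le_trans (measure_mono (fun x hx => lt_of_lt_of_le hsc hx)) hs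

lemma weak_measure_bound {Y : Type*} [MeasurableSpace Y] (ν : Measure Y) (q : ℝ≥0∞)
    (g : Y → ℂ) {e : ℝ} (he : 0 < e) {t : ℝ≥0∞} (ht : 0 < t) (ht' : t ≠ ∞)
    (h : lorentzNorm ν q ∞ g < t ^ (1/q).toReal * ENNReal.ofReal e) :
    ν {y | e ≤ ‖g y‖} ≤ t := by
  have hsub : ∀ {u : ℝ≥0∞}, u ≤ t →
      ν {y | ENNReal.ofReal e ≤ (‖g y‖₊ : ℝ≥0∞)} ≤ u → ν {y | e ≤ ‖g y‖} ≤ t := by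
    intro u hu hle
    refine le_trans (le_trans (measure_mono ?_) hle) hu
    intro y hy
    simp only [mem_setOf_eq] at *
    rw [← enorm_eq_nnnorm, ← ofReal_norm]
    exact ENNReal.ofReal_le_ofReal hy
  by_cases hqi : q = ∞
  · subst hqi
    rw [lorentzNorm, if_pos rfl] at h
    have h0 : ((1:ℝ≥0∞)/∞).toReal = 0 := by simp
    rw [h0, ENNReal.rpow_zero, one_mul] at h
    exact hsub (zero_le : (0:ℝ≥0∞) ≤ t) (rearr_spec h)
  · rw [lorentzNorm, if_neg hqi, if_pos rfl] at h
    have hb : (0:ℝ) ≤ (1/q).toReal := ENNReal.toReal_nonneg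
    have htb0 : 0 < t ^ (1/q).toReal := ENNReal.rpow_pos ht ht'
    have htbt : t ^ (1/q).toReal ≠ ∞ := ENNReal.rpow_ne_top_of_nonneg hb ht'
    have hsup : t ^ (1/q).toReal * rearr ν g t ≤
        ⨆ s : ℝ≥0∞, s ^ (1/q).toReal * rearr ν g s :=
      le_iSup (fun s : ℝ≥0∞ => s ^ (1/q).toReal * rearr ν g s) t
    have hlt : t ^ (1/q).toReal * rearr ν g t < t ^ (1/q).toReal * ENNReal.ofReal e :=
      lt_of_le_of_lt hsup h
    have hre : rearr ν g t < ENNReal.ofReal e :=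
      (ENNReal.mul_lt_mul_iff_right htb0.ne' htbt).mp hlt
    exact hsub le_rfl (rearr_spec hre)


/-- A quasi-additive operator of weak-type `(p,q)` is countably `α`-quasi-additive on
`L^p`, where `(2K)^α = 2`. -/
theorem stmt7 {X Y : Type*} [MeasurableSpace X] [MeasurableSpace Y]
    (μ : Measure X) (ν : Measure Y) [SigmaFinite μ] [SigmaFinite ν]
    (p q : ℝ≥0∞) (hp : 0 < p) (hp' : p ≠ ∞) (hq : 0 < q)
    (T : (X → ℂ) → (Y → ℂ))
    -- values in measurable functions
    (hTm : ∀ f, MemLp f p μ → Measurable (T f))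
    -- quasi-additivity with constant K
    (K : ℝ) (hK : 1 ≤ K)
    (hquasi : ∀ f g, MemLp f p μ → MemLp g p μ →
      ∀ᵐ y ∂ν, ‖T (f + g) y‖ ≤ K * (‖T f y‖ + ‖T g y‖))
    -- weak-type (p,q)
    (C : ℝ≥0∞) (hC : C < ∞)
    (hweak : ∀ f, MemLp f p μ → lorentzNorm ν q ∞ (T f) ≤ C * eLpNorm f p μ)
    (α : ℝ) (hα : 0 < α) (hKα : (2 * K) ^ α = 2)
    -- a series converging in L^p
    (fs : ℕ → X → ℂ) (F : X → ℂ) (hfs : ∀ j, MemLp (fs j) p μ) (hF : MemLp F p μ)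
    (hconv : Tendsto
      (fun N => eLpNorm (fun x => F x - ∑ j ∈ Finset.range N, fs j x) p μ) atTop (𝓝 0)) :
    ∀ᵐ y ∂ν, (‖T F y‖₊ : ℝ≥0∞) ^ α ≤ 4 * ∑' j, (‖T (fs j) y‖₊ : ℝ≥0∞) ^ α := by
  classical
  set G : ℕ → X → ℂ := fun N x => F x - ∑ j ∈ Finset.range N, fs j x with hGdef
  have hGmem : ∀ N, MemLp (G N) p μ := by
    intro N
    exact hF.sub (memLp_finsetSum (Finset.range N) (fun j _ => hfs j))
  set h : ℕ → ℕ → X → ℂ := fun N i => if i < N then fs i else if i = N then G N else 0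
    with hhdef
  have hhmem : ∀ N i, MemLp (h N i) p μ := by
    intro N i
    simp only [hhdef]
    split_ifs with h1 h2
    · exact hfs i
    · exact hGmem N
    · exact MemLp.zero
  have hSmem : ∀ N (S : Finset ℕ), MemLp (∑ i ∈ S, h N i) p μ := by
    intro N S
    exact memLp_finsetSum' S (fun i _ => hhmem N i)
  have hsumF : ∀ N, (∑ i ∈ Finset.range (N+1), h N i) = F := by
    intro N
    funext x
    rw [Finset.sum_apply, Finset.sum_range_succ]
    have h1 : ∀ i ∈ Finset.range N, h N i x = fs i x := by
      intro i hi
      simp only [hhdef]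
      rw [if_pos (Finset.mem_range.mp hi)]
    rw [Finset.sum_congr rfl h1]
    have h2 : h N N x = F x - ∑ j ∈ Finset.range N, fs j x := by
      simp [hhdef, hGdef]
    rw [h2]
    ring
  -- a.e. quasi-additivity on all finite subsums
  have hq_ae : ∀ᵐ y ∂ν, ∀ (N : ℕ) (S1 S2 : Finset ℕ), Disjoint S1 S2 →
      ‖T (∑ i ∈ S1 ∪ S2, h N i) y‖ ≤
        K * (‖T (∑ i ∈ S1, h N i) y‖ + ‖T (∑ i ∈ S2, h N i) y‖) := by
    rw [ae_all_iff]
    intro N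
    rw [ae_all_iff]
    intro S1
    rw [ae_all_iff]
    intro S2
    by_cases hd : Disjoint S1 S2
    · filter_upwards [hquasi _ _ (hSmem N S1) (hSmem N S2)] with y hy _
      rw [Finset.sum_union hd]
      exact hy
    · filter_upwards with y hy
      exact absurd hy hd
  -- Lorentz norms of the tails tend to zero
  have hconv' : Tendsto (fun N => eLpNorm (G N) p μ) atTop (𝓝 0) := hconv
  have hTL : Tendsto (fun N => lorentzNorm ν q ∞ (T (G N))) atTop (𝓝 0) := by
    have h2 : Tendsto (fun N => C * eLpNorm (G N) p μ) atTop (𝓝 0) := by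
      have := ENNReal.Tendsto.const_mul hconv' (Or.inr hC.ne)
      simpa using this
    exact tendsto_of_tendsto_of_tendsto_of_le_of_le tendsto_const_nhds h2
      (fun N => zero_le) (fun N => hweak _ (hGmem N))
  -- hence tendsto in measure
  have hTIM : TendstoInMeasure ν (fun N => T (G N)) atTop 0 := by
    rw [tendstoInMeasure_iff_dist]
    intro e he
    simp only [Pi.zero_apply, dist_zero_right]
    rw [ENNReal.tendsto_nhds_zero]
    intro δ hδ
    set t := min δ 1 with htdef
    have ht : 0 < t := lt_min hδ zero_lt_one
    have ht' : t ≠ ∞ := ne_top_of_le_ne_top one_ne_top (min_le_right _ _)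
    have hthr : (0:ℝ≥0∞) < t ^ (1/q).toReal * ENNReal.ofReal e :=
      ENNReal.mul_pos (ENNReal.rpow_pos ht ht').ne' (ENNReal.ofReal_pos.mpr he).ne'
    have hev : ∀ᶠ N in atTop,
        lorentzNorm ν q ∞ (T (G N)) < t ^ (1/q).toReal * ENNReal.ofReal e :=
      hTL.eventually_lt_const hthr
    filter_upwards [hev] with N hN
    exact le_trans (weak_measure_bound ν q (T (G N)) he ht ht' hN) (min_le_left _ _)
  obtain ⟨ns, hmono, hae⟩ := hTIM.exists_seq_tendsto_ae
  -- combine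
  filter_upwards [hq_ae, hae] with y hqy hty
  have hty0 : Tendsto (fun k => ‖T (G (ns k)) y‖) atTop (𝓝 0) := by
    have := hty.norm
    simpa using this
  have htyp : Tendsto (fun k => ‖T (G (ns k)) y‖ ^ α) atTop (𝓝 0) := by
    have hc := (Real.continuousAt_rpow_const 0 α (Or.inr hα.le)).tendsto.comp hty0
    simpa [Function.comp_def, Real.zero_rpow hα.ne'] using hc
  have hfin : ∀ N : ℕ, ‖T F y‖ ^ α ≤
      4 * (∑ j ∈ Finset.range N, ‖T (fs j) y‖ ^ α + ‖T (G N) y‖ ^ α) := by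
    intro N
    have hb := fin_bound hK hα hKα (fun S => ‖T (∑ i ∈ S, h N i) y‖)
      (fun S => norm_nonneg _) (hqy N) (N+1) (Nat.succ_pos N)
    rw [hsumF N, Finset.sum_range_succ] at hb
    have e2 : ∑ i ∈ Finset.range N, ‖T (∑ j ∈ ({i} : Finset ℕ), h N j) y‖ ^ α
        = ∑ j ∈ Finset.range N, ‖T (fs j) y‖ ^ α := by
      refine Finset.sum_congr rfl (fun i hi => ?_)
      have hfi : h N i = fs i := by
        simp only [hhdef]
        rw [if_pos (Finset.mem_range.mp hi)]
      rw [Finset.sum_singleton, hfi]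
    have e3 : (∑ j ∈ ({N} : Finset ℕ), h N j) = G N := by
      rw [Finset.sum_singleton]
      simp [hhdef]
    rw [e2, e3] at hb
    exact hb
  -- pass to the limit
  have hL : (‖T F y‖₊ : ℝ≥0∞) ^ α = ENNReal.ofReal (‖T F y‖ ^ α) := by
    rw [← enorm_eq_nnnorm, ← ofReal_norm, ENNReal.ofReal_rpow_of_nonneg (norm_nonneg _) hα.le]
  have hc : ∀ j : ℕ, (‖T (fs j) y‖₊ : ℝ≥0∞) ^ α = ENNReal.ofReal (‖T (fs j) y‖ ^ α) := by
    intro j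
    rw [← enorm_eq_nnnorm, ← ofReal_norm, ENNReal.ofReal_rpow_of_nonneg (norm_nonneg _) hα.le]
  set S : ℝ≥0∞ := ∑' j, (‖T (fs j) y‖₊ : ℝ≥0∞) ^ α with hSdef
  have key : ∀ k, (‖T F y‖₊ : ℝ≥0∞) ^ α ≤
      4 * S + 4 * ENNReal.ofReal (‖T (G (ns k)) y‖ ^ α) := by
    intro k
    rw [hL]
    have hsum_nonneg : (0:ℝ) ≤ ∑ j ∈ Finset.range (ns k), ‖T (fs j) y‖ ^ α :=
      Finset.sum_nonneg fun j _ => Real.rpow_nonneg (norm_nonneg _) _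
    calc ENNReal.ofReal (‖T F y‖ ^ α)
        ≤ ENNReal.ofReal (4 * (∑ j ∈ Finset.range (ns k), ‖T (fs j) y‖ ^ α
            + ‖T (G (ns k)) y‖ ^ α)) := ENNReal.ofReal_le_ofReal (hfin (ns k))
      _ = 4 * (∑ j ∈ Finset.range (ns k), ENNReal.ofReal (‖T (fs j) y‖ ^ α)
            + ENNReal.ofReal (‖T (G (ns k)) y‖ ^ α)) := by
          rw [ENNReal.ofReal_mul (by norm_num),
            ENNReal.ofReal_add hsum_nonneg (Real.rpow_nonneg (norm_nonneg _) _),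
            ENNReal.ofReal_sum_of_nonneg (fun j _ => Real.rpow_nonneg (norm_nonneg _) _)]
          norm_num
      _ ≤ 4 * (S + ENNReal.ofReal (‖T (G (ns k)) y‖ ^ α)) := by
          gcongr
          calc ∑ j ∈ Finset.range (ns k), ENNReal.ofReal (‖T (fs j) y‖ ^ α)
              = ∑ j ∈ Finset.range (ns k), (‖T (fs j) y‖₊ : ℝ≥0∞) ^ α := by
                refine Finset.sum_congr rfl (fun j _ => (hc j).symm)
            _ ≤ S := ENNReal.sum_le_tsum _
      _ = 4 * S + 4 * ENNReal.ofReal (‖T (G (ns k)) y‖ ^ α) := by rw [mul_add]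
  have hlim : Tendsto (fun k => 4 * S + 4 * ENNReal.ofReal (‖T (G (ns k)) y‖ ^ α))
      atTop (𝓝 (4 * S + 0)) := by
    apply Tendsto.const_add
    have h0 : Tendsto (fun k => ENNReal.ofReal (‖T (G (ns k)) y‖ ^ α)) atTop (𝓝 0) := by
      have := ENNReal.tendsto_ofReal htyp
      simpa using this
    have := ENNReal.Tendsto.const_mul h0 (Or.inr (by norm_num : (4:ℝ≥0∞) ≠ ∞))
    simpa using this
  have hfinal := ge_of_tendsto' hlim key
  rw [add_zero] at hfinal
  exact hfinal

end Paper
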